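/- There is no piecewise $*$-homomorphism from $M_n(\mathbb{C})$ to $\mathbb{C}$ for $n \geq 3$, i.e. there is no map $\zeta : \mathbb{C}(M_n) \to \mathbb{C}$ from the normal $n \times n$ matrices to $\mathbb{C}$ that is unital, involutive, $\mathbb{C}$-homogeneous, and additive and multiplicative on all pairs of commuting normal matrices. -/

import Mathlib

open Matrix

namespace KS

variable {n : ℕ}

noncomputable section

def v (n : ℕ) (a b c : ℤ) : Fin n → ℂ := fun i =>
  if (i : ℕ) = 0 then (a : ℂ) else if (i : ℕ) = 1 then (b : ℂ) else if (i : ℕ) = 2 then (c : ℂ) else 0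

def NN (a b c : ℤ) : ℂ := ((a * a + b * b + c * c : ℤ) : ℂ)

def P (n : ℕ) (a b c : ℤ) : Matrix (Fin n) (Fin n) ℂ :=
  (NN a b c)⁻¹ • Matrix.vecMulVec (v n a b c) (v n a b c)

def E (n : ℕ) : Matrix (Fin n) (Fin n) ℂ :=
  Matrix.diagonal (fun i => if (i : ℕ) < 3 then 1 else 0)

lemma star_v (a b c : ℤ) : star (v n a b c) = v n a b c := by
  funext i
  simp only [v, Pi.star_apply]
  split_ifs <;> simp

lemma sum_ite_val (hm : 3 ≤ n) (m : ℕ) (hmlt : m < 3) (x : ℂ) :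
    (∑ i : Fin n, if (i : ℕ) = m then x else 0) = x := by
  rw [Finset.sum_eq_single (⟨m, lt_of_lt_of_le hmlt hm⟩ : Fin n)]
  · simp
  · intro i _ hne
    rw [if_neg]
    intro h
    exact hne (Fin.ext h)
  · intro h
    exact absurd (Finset.mem_univ _) h

lemma dot (hn : 3 ≤ n) (a b c a' b' c' : ℤ) :
    v n a b c ⬝ᵥ v n a' b' c' = ((a * a' + b * b' + c * c' : ℤ) : ℂ) := by
  unfold dotProduct
  have : ∀ i : Fin n, v n a b c i * v n a' b' c' i =
      (if (i : ℕ) = 0 then ((a * a' : ℤ) : ℂ) else 0) +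
      ((if (i : ℕ) = 1 then ((b * b' : ℤ) : ℂ) else 0) +
       (if (i : ℕ) = 2 then ((c * c' : ℤ) : ℂ) else 0)) := by
    intro i
    simp only [v]
    split_ifs <;> first | (exfalso; omega) | (push_cast; ring1)
  rw [Finset.sum_congr rfl (fun i _ => this i)]
  rw [Finset.sum_add_distrib, Finset.sum_add_distrib]
  rw [sum_ite_val hn 0 (by norm_num), sum_ite_val hn 1 (by norm_num), sum_ite_val hn 2 (by norm_num)]
  push_cast; ring

lemma vmv_mul (x y z w : Fin n → ℂ) :
    Matrix.vecMulVec x y * Matrix.vecMulVec z w = (y ⬝ᵥ z) • Matrix.vecMulVec x w := by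
  ext i j
  simp only [Matrix.mul_apply, Matrix.vecMulVec_apply, Matrix.smul_apply, smul_eq_mul, dotProduct]
  rw [Finset.sum_mul]
  apply Finset.sum_congr rfl
  intro k _
  ring

lemma NN_star (a b c : ℤ) : star (NN a b c) = NN a b c := by
  simp [NN]

lemma P_sa (a b c : ℤ) : (P n a b c)ᴴ = P n a b c := by
  unfold P
  rw [Matrix.conjTranspose_smul]
  congr 1
  · rw [star_inv₀, NN_star]
  · ext i j
    simp only [Matrix.conjTranspose_apply, Matrix.vecMulVec_apply]
    have hs := congrFun (star_v (n := n) a b c)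
    simp only [Pi.star_apply] at hs
    rw [star_mul', hs, hs]
    ring

lemma P_norm (a b c : ℤ) : IsStarNormal (P n a b c) := by
  constructor
  rw [Matrix.star_eq_conjTranspose, P_sa]

lemma P_mul (hn : 3 ≤ n) (a b c a' b' c' : ℤ) (h : a * a' + b * b' + c * c' = 0) :
    P n a b c * P n a' b' c' = 0 := by
  unfold P
  rw [Matrix.smul_mul, Matrix.mul_smul, vmv_mul, dot hn, h]
  simp

lemma P_idem (hn : 3 ≤ n) (a b c : ℤ) (hN : a * a + b * b + c * c ≠ 0) :
    P n a b c * P n a b c = P n a b c := by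
  unfold P
  rw [Matrix.smul_mul, Matrix.mul_smul, vmv_mul, dot hn]
  rw [smul_smul, smul_smul]
  congr 1
  have : ((a * a + b * b + c * c : ℤ) : ℂ) ≠ 0 := by
    exact_mod_cast hN
  unfold NN
  field_simp

lemma trace_P (hn : 3 ≤ n) (a b c : ℤ) (hN : a * a + b * b + c * c ≠ 0) :
    Matrix.trace (P n a b c) = 1 := by
  unfold P
  rw [Matrix.trace_smul]
  have ht : Matrix.trace (Matrix.vecMulVec (v n a b c) (v n a b c)) = v n a b c ⬝ᵥ v n a b c := by
    simp [Matrix.trace, Matrix.diag, Matrix.vecMulVec_apply, dotProduct]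
  rw [ht, dot hn]
  have h0 : ((a * a + b * b + c * c : ℤ) : ℂ) ≠ 0 := by exact_mod_cast hN
  simp only [smul_eq_mul, NN]
  rw [inv_mul_cancel₀ h0]

lemma E_mul_vmv (a b c : ℤ) :
    E n * Matrix.vecMulVec (v n a b c) (v n a b c) = Matrix.vecMulVec (v n a b c) (v n a b c) := by
  unfold E
  ext i j
  rw [Matrix.diagonal_mul]
  by_cases h : (i : ℕ) < 3
  · simp [h]
  · have : v n a b c i = 0 := by
      simp only [v]
      split_ifs <;> first | (exfalso; omega) | rfl
    simp [E, h, Matrix.vecMulVec_apply, this]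

lemma E_mul_P (a b c : ℤ) : E n * P n a b c = P n a b c := by
  unfold P
  rw [Matrix.mul_smul, E_mul_vmv]

lemma E_sa : (E n)ᴴ = E n := by
  unfold E
  rw [Matrix.diagonal_conjTranspose]
  have : (star fun i : Fin n => if (i : ℕ) < 3 then (1:ℂ) else 0) = fun i : Fin n => if (i : ℕ) < 3 then (1:ℂ) else 0 := by
    funext i
    simp only [Pi.star_apply]
    split_ifs <;> simp
  rw [this]

lemma P_mul_E (a b c : ℤ) : P n a b c * E n = P n a b c := by
  have h1 : (P n a b c * E n)ᴴ = P n a b c := by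
    rw [Matrix.conjTranspose_mul, E_sa, P_sa, E_mul_P]
  calc P n a b c * E n = ((P n a b c * E n)ᴴ)ᴴ := by rw [Matrix.conjTranspose_conjTranspose]
  _ = (P n a b c)ᴴ := by rw [h1]
  _ = P n a b c := P_sa a b c

lemma E_idem : E n * E n = E n := by
  unfold E
  rw [Matrix.diagonal_mul_diagonal]
  have : (fun i : Fin n => (if (i : ℕ) < 3 then (1:ℂ) else 0) * (if (i : ℕ) < 3 then (1:ℂ) else 0)) = fun i : Fin n => if (i : ℕ) < 3 then (1:ℂ) else 0 := by
    funext i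
    split_ifs <;> simp
  rw [this]

lemma trace_E (hn : 3 ≤ n) : Matrix.trace (E n) = 3 := by
  unfold E
  rw [Matrix.trace_diagonal]
  have : ∀ i : Fin n, (if (i : ℕ) < 3 then (1 : ℂ) else 0) =
      (if (i : ℕ) = 0 then (1:ℂ) else 0) + ((if (i : ℕ) = 1 then (1:ℂ) else 0) + (if (i : ℕ) = 2 then (1:ℂ) else 0)) := by
    intro i
    split_ifs <;> first | (exfalso; omega) | norm_num
  rw [Finset.sum_congr rfl (fun i _ => this i), Finset.sum_add_distrib, Finset.sum_add_distrib,
    sum_ite_val hn 0 (by norm_num) 1, sum_ite_val hn 1 (by norm_num) 1, sum_ite_val hn 2 (by norm_num) 1]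
  norm_num

lemma sa_idem_trace_zero (Q : Matrix (Fin n) (Fin n) ℂ) (hsa : Qᴴ = Q) (h2 : Q * Q = Q)
    (htr : Matrix.trace Q = 0) : Q = 0 := by
  have key : Matrix.trace (Q * Qᴴ) = 0 := by rw [hsa, h2, htr]
  have expand : Matrix.trace (Q * Qᴴ) = ∑ i, ∑ j, (Complex.normSq (Q i j) : ℂ) := by
    simp only [Matrix.trace, Matrix.diag, Matrix.mul_apply, Matrix.conjTranspose_apply]
    apply Finset.sum_congr rfl; intro i _
    apply Finset.sum_congr rfl; intro j _
    exact (Complex.mul_conj _)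
  rw [expand] at key
  have key2 : (∑ i, ∑ j, Complex.normSq (Q i j)) = 0 := by
    have := key
    push_cast at this ⊢
    exact_mod_cast this
  ext i j
  have h1 : ∀ i ∈ (Finset.univ : Finset (Fin n)), 0 ≤ ∑ j, Complex.normSq (Q i j) := by
    intro i _
    exact Finset.sum_nonneg fun j _ => Complex.normSq_nonneg _
  have h2' := (Finset.sum_eq_zero_iff_of_nonneg h1).mp key2 i (Finset.mem_univ i)
  have h3 : ∀ j ∈ (Finset.univ : Finset (Fin n)), 0 ≤ Complex.normSq (Q i j) :=
    fun j _ => Complex.normSq_nonneg _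
  have h4 := (Finset.sum_eq_zero_iff_of_nonneg h3).mp h2' j (Finset.mem_univ j)
  simpa using Complex.normSq_eq_zero.mp h4

lemma triple (hn : 3 ≤ n) (a1 b1 c1 a2 b2 c2 a3 b3 c3 : ℤ)
    (h1 : a1*a1+b1*b1+c1*c1 ≠ 0) (h2 : a2*a2+b2*b2+c2*c2 ≠ 0) (h3 : a3*a3+b3*b3+c3*c3 ≠ 0)
    (h12 : a1*a2+b1*b2+c1*c2 = 0) (h13 : a1*a3+b1*b3+c1*c3 = 0) (h23 : a2*a3+b2*b3+c2*c3 = 0) :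
    P n a1 b1 c1 + P n a2 b2 c2 + P n a3 b3 c3 = E n := by
  have m12 : P n a1 b1 c1 * P n a2 b2 c2 = 0 := P_mul hn _ _ _ _ _ _ h12
  have m21 : P n a2 b2 c2 * P n a1 b1 c1 = 0 := P_mul hn _ _ _ _ _ _ (by linear_combination h12)
  have m13 : P n a1 b1 c1 * P n a3 b3 c3 = 0 := P_mul hn _ _ _ _ _ _ h13
  have m31 : P n a3 b3 c3 * P n a1 b1 c1 = 0 := P_mul hn _ _ _ _ _ _ (by linear_combination h13)
  have m23 : P n a2 b2 c2 * P n a3 b3 c3 = 0 := P_mul hn _ _ _ _ _ _ h23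
  have m32 : P n a3 b3 c3 * P n a2 b2 c2 = 0 := P_mul hn _ _ _ _ _ _ (by linear_combination h23)
  have i1 : P n a1 b1 c1 * P n a1 b1 c1 = P n a1 b1 c1 := P_idem hn _ _ _ h1
  have i2 : P n a2 b2 c2 * P n a2 b2 c2 = P n a2 b2 c2 := P_idem hn _ _ _ h2
  have i3 : P n a3 b3 c3 * P n a3 b3 c3 = P n a3 b3 c3 := P_idem hn _ _ _ h3
  have e1 : E n * P n a1 b1 c1 = P n a1 b1 c1 := E_mul_P _ _ _
  have e2 : E n * P n a2 b2 c2 = P n a2 b2 c2 := E_mul_P _ _ _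
  have e3 : E n * P n a3 b3 c3 = P n a3 b3 c3 := E_mul_P _ _ _
  have f1 : P n a1 b1 c1 * E n = P n a1 b1 c1 := P_mul_E _ _ _
  have f2 : P n a2 b2 c2 * E n = P n a2 b2 c2 := P_mul_E _ _ _
  have f3 : P n a3 b3 c3 * E n = P n a3 b3 c3 := P_mul_E _ _ _
  set P1 := P n a1 b1 c1
  set P2 := P n a2 b2 c2
  set P3 := P n a3 b3 c3
  set S := P1 + P2 + P3 with hS
  have hA : S * S = S := by
    simp only [hS, add_mul, mul_add, i1, i2, i3, m12, m21, m13, m31, m23, m32,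
      add_zero, zero_add]
  have eS : E n * S = S := by
    simp only [hS, mul_add, e1, e2, e3]
  have eS' : S * E n = S := by
    simp only [hS, add_mul, f1, f2, f3]
  have hQ2 : (E n - S) * (E n - S) = E n - S := by
    rw [sub_mul, mul_sub, mul_sub, E_idem, eS, eS', hA]
    abel
  have hQsa : (E n - S)ᴴ = E n - S := by
    rw [Matrix.conjTranspose_sub, E_sa, hS, Matrix.conjTranspose_add, Matrix.conjTranspose_add,
      P_sa, P_sa, P_sa]
  have hQtr : Matrix.trace (E n - S) = 0 := by
    rw [Matrix.trace_sub, trace_E hn, hS, Matrix.trace_add, Matrix.trace_add,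
      trace_P hn _ _ _ h1, trace_P hn _ _ _ h2, trace_P hn _ _ _ h3]
    norm_num
  have hz := sa_idem_trace_zero _ hQsa hQ2 hQtr
  have := sub_eq_zero.mp hz
  exact this.symm

section Zeta

variable (ζ : Matrix (Fin n) (Fin n) ℂ → ℂ)
variable (hadm : ∀ a b : Matrix (Fin n) (Fin n) ℂ, IsStarNormal a → IsStarNormal b → Commute a b →
    ζ (a + b) = ζ a + ζ b ∧ ζ (a * b) = ζ a * ζ b)

lemma sa_normal {p : Matrix (Fin n) (Fin n) ℂ} (hp : pᴴ = p) : IsStarNormal p := by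
  constructor
  rw [Matrix.star_eq_conjTranspose, hp]

include hadm

lemma zeta_zero : ζ 0 = 0 := by
  have h := (hadm 0 0 IsStarNormal.zero IsStarNormal.zero (Commute.refl 0)).1
  rw [add_zero] at h
  linear_combination -h

lemma zeta_proj_val {p : Matrix (Fin n) (Fin n) ℂ} (hsa : pᴴ = p) (hid : p * p = p) :
    ζ p = 0 ∨ ζ p = 1 := by
  have hnorm := sa_normal hsa
  have h := (hadm p p hnorm hnorm rfl).2
  rw [hid] at h
  have h2 : ζ p * (ζ p - 1) = 0 := by linear_combination -h
  rcases mul_eq_zero.mp h2 with h3 | h3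
  · exact Or.inl h3
  · exact Or.inr (by linear_combination h3)

lemma zeta_orth {p q : Matrix (Fin n) (Fin n) ℂ} (hsap : pᴴ = p) (hsaq : qᴴ = q)
    (hpq : p * q = 0) (hqp : q * p = 0) : ζ p * ζ q = 0 := by
  have h := (hadm p q (sa_normal hsap) (sa_normal hsaq) (hpq.trans hqp.symm)).2
  rw [hpq, zeta_zero ζ hadm] at h
  exact h.symm

lemma zeta_add3 {p q r : Matrix (Fin n) (Fin n) ℂ} (hsap : pᴴ = p) (hsaq : qᴴ = q) (hsar : rᴴ = r)
    (hpq : p * q = 0) (hqp : q * p = 0) (hpr : p * r = 0) (hrp : r * p = 0)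
    (hqr : q * r = 0) (hrq : r * q = 0) :
    ζ (p + q + r) = ζ p + ζ q + ζ r := by
  have np := sa_normal hsap
  have nq := sa_normal hsaq
  have nr := sa_normal hsar
  have step1 := (hadm p q np nq (hpq.trans hqp.symm)).1
  have npq : IsStarNormal (p + q) := sa_normal (by rw [Matrix.conjTranspose_add, hsap, hsaq])
  have hcomm : Commute (p + q) r := by
    unfold Commute SemiconjBy
    rw [add_mul, mul_add, hpr, hqr, hrp, hrq]
  have step2 := (hadm (p + q) r npq nr hcomm).1
  rw [step1] at step2
  exact step2

end Zeta

lemma ksbnd {a : ℤ} (h : a = 0 ∨ a = 1) : 0 ≤ a ∧ a ≤ 1 := by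
  rcases h with rfl|rfl <;> norm_num

lemma kspr {a b : ℤ} (ha : a ≤ 1) (hb : b ≤ 1) (h : a = 0 ∨ b = 0) : a + b ≤ 1 := by
  rcases h with rfl|rfl <;> omega

set_option maxHeartbeats 1000000 in
theorem kscomb (m0 m1 m2 m3 m4 m5 m6 m7 m8 m9 m10 m11 m12 m13 m14 m15 m16 m17 m18 m19 m20 m21 m22 m23 m24 m25 m26 m27 m28 m29 m30 m31 m32 : ℤ)
    (hb0 : m0 = 0 ∨ m0 = 1)
    (hb1 : m1 = 0 ∨ m1 = 1)
    (hb2 : m2 = 0 ∨ m2 = 1)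
    (hb3 : m3 = 0 ∨ m3 = 1)
    (hb4 : m4 = 0 ∨ m4 = 1)
    (hb5 : m5 = 0 ∨ m5 = 1)
    (hb6 : m6 = 0 ∨ m6 = 1)
    (hb7 : m7 = 0 ∨ m7 = 1)
    (hb8 : m8 = 0 ∨ m8 = 1)
    (hb9 : m9 = 0 ∨ m9 = 1)
    (hb10 : m10 = 0 ∨ m10 = 1)
    (hb11 : m11 = 0 ∨ m11 = 1)
    (hb12 : m12 = 0 ∨ m12 = 1)
    (hb13 : m13 = 0 ∨ m13 = 1)
    (hb14 : m14 = 0 ∨ m14 = 1)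
    (hb15 : m15 = 0 ∨ m15 = 1)
    (hb16 : m16 = 0 ∨ m16 = 1)
    (hb17 : m17 = 0 ∨ m17 = 1)
    (hb18 : m18 = 0 ∨ m18 = 1)
    (hb19 : m19 = 0 ∨ m19 = 1)
    (hb20 : m20 = 0 ∨ m20 = 1)
    (hb21 : m21 = 0 ∨ m21 = 1)
    (hb22 : m22 = 0 ∨ m22 = 1)
    (hb23 : m23 = 0 ∨ m23 = 1)
    (hb24 : m24 = 0 ∨ m24 = 1)
    (hb25 : m25 = 0 ∨ m25 = 1)
    (hb26 : m26 = 0 ∨ m26 = 1)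
    (hb27 : m27 = 0 ∨ m27 = 1)
    (hb28 : m28 = 0 ∨ m28 = 1)
    (hb29 : m29 = 0 ∨ m29 = 1)
    (hb30 : m30 = 0 ∨ m30 = 1)
    (hb31 : m31 = 0 ∨ m31 = 1)
    (hb32 : m32 = 0 ∨ m32 = 1)
    (hp4_31 : m4 = 0 ∨ m31 = 0)
    (hp5_30 : m5 = 0 ∨ m30 = 0)
    (hp5_32 : m5 = 0 ∨ m32 = 0)
    (hp6_31 : m6 = 0 ∨ m31 = 0)
    (hp7_29 : m7 = 0 ∨ m29 = 0)
    (hp11_28 : m11 = 0 ∨ m28 = 0)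
    (hp12_27 : m12 = 0 ∨ m27 = 0)
    (hp12_32 : m12 = 0 ∨ m32 = 0)
    (hp16_25 : m16 = 0 ∨ m25 = 0)
    (hp16_30 : m16 = 0 ∨ m30 = 0)
    (hp17_29 : m17 = 0 ∨ m29 = 0)
    (hp21_28 : m21 = 0 ∨ m28 = 0)
    (hp22_26 : m22 = 0 ∨ m26 = 0)
    (hp23_25 : m23 = 0 ∨ m25 = 0)
    (hp23_27 : m23 = 0 ∨ m27 = 0)
    (hp24_26 : m24 = 0 ∨ m26 = 0)
    (ht0_2_14 : m0 + m2 + m14 = 1)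
    (ht0_5_31 : m0 + m5 + m31 = 1)
    (ht0_9_19 : m0 + m9 + m19 = 1)
    (ht0_23_26 : m0 + m23 + m26 = 1)
    (ht1_3_14 : m1 + m3 + m14 = 1)
    (ht1_8_32 : m1 + m8 + m32 = 1)
    (ht1_20_25 : m1 + m20 + m25 = 1)
    (ht2_12_29 : m2 + m12 + m29 = 1)
    (ht2_13_15 : m2 + m13 + m15 = 1)
    (ht2_16_28 : m2 + m16 + m28 = 1)
    (ht3_10_30 : m3 + m10 + m30 = 1)
    (ht3_18_27 : m3 + m18 + m27 = 1)
    (ht4_15_18 : m4 + m15 + m18 = 1)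
    (ht6_13_20 : m6 + m13 + m20 = 1)
    (ht7_10_19 : m7 + m10 + m19 = 1)
    (ht8_11_19 : m8 + m11 + m19 = 1)
    (ht8_15_22 : m8 + m15 + m22 = 1)
    (ht9_17_20 : m9 + m17 + m20 = 1)
    (ht9_18_21 : m9 + m18 + m21 = 1)
    (ht10_13_24 : m10 + m13 + m24 = 1)
    : False := by
  have hc0 := ksbnd hb0
  have hc1 := ksbnd hb1
  have hc2 := ksbnd hb2
  have hc3 := ksbnd hb3
  have hc4 := ksbnd hb4
  have hc5 := ksbnd hb5
  have hc6 := ksbnd hb6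
  have hc7 := ksbnd hb7
  have hc8 := ksbnd hb8
  have hc9 := ksbnd hb9
  have hc10 := ksbnd hb10
  have hc11 := ksbnd hb11
  have hc12 := ksbnd hb12
  have hc13 := ksbnd hb13
  have hc14 := ksbnd hb14
  have hc15 := ksbnd hb15
  have hc16 := ksbnd hb16
  have hc17 := ksbnd hb17
  have hc18 := ksbnd hb18
  have hc19 := ksbnd hb19
  have hc20 := ksbnd hb20
  have hc21 := ksbnd hb21
  have hc22 := ksbnd hb22
  have hc23 := ksbnd hb23
  have hc24 := ksbnd hb24
  have hc25 := ksbnd hb25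
  have hc26 := ksbnd hb26
  have hc27 := ksbnd hb27
  have hc28 := ksbnd hb28
  have hc29 := ksbnd hb29
  have hc30 := ksbnd hb30
  have hc31 := ksbnd hb31
  have hc32 := ksbnd hb32
  have hq4_31 := kspr hc4.2 hc31.2 hp4_31
  have hq5_30 := kspr hc5.2 hc30.2 hp5_30
  have hq5_32 := kspr hc5.2 hc32.2 hp5_32
  have hq6_31 := kspr hc6.2 hc31.2 hp6_31
  have hq7_29 := kspr hc7.2 hc29.2 hp7_29
  have hq11_28 := kspr hc11.2 hc28.2 hp11_28
  have hq12_27 := kspr hc12.2 hc27.2 hp12_27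
  have hq12_32 := kspr hc12.2 hc32.2 hp12_32
  have hq16_25 := kspr hc16.2 hc25.2 hp16_25
  have hq16_30 := kspr hc16.2 hc30.2 hp16_30
  have hq17_29 := kspr hc17.2 hc29.2 hp17_29
  have hq21_28 := kspr hc21.2 hc28.2 hp21_28
  have hq22_26 := kspr hc22.2 hc26.2 hp22_26
  have hq23_25 := kspr hc23.2 hc25.2 hp23_25
  have hq23_27 := kspr hc23.2 hc27.2 hp23_27
  have hq24_26 := kspr hc24.2 hc26.2 hp24_26
  clear hp4_31 hp5_30 hp5_32 hp6_31 hp7_29 hp11_28 hp12_27 hp12_32 hp16_25 hp16_30 hp17_29 hp21_28 hp22_26 hp23_25 hp23_27 hp24_26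
  rcases hb0 with rfl|rfl
  · rcases hb2 with rfl|rfl
    · rcases hb5 with rfl|rfl
      · rcases hb9 with rfl|rfl
        · clear hc22 hc23 hc24 hc25 hc26 hc27 hq5_30 hq5_32 hq7_29 hq12_27 hq16_25 hq22_26 hq23_25 hq23_27 hq24_26 ht0_23_26 ht1_20_25 ht3_18_27 ht8_15_22 ht10_13_24 hb1 hb3 hb4 hb6 hb7 hb8 hb10 hb11 hb12 hb13 hb14 hb15 hb16 hb17 hb18 hb19 hb20 hb21 hb22 hb23 hb24 hb25 hb26 hb27 hb28 hb29 hb30 hb31 hb32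
          omega
        · clear hc7 hc8 hc10 hc11 hc12 hc19 hc22 hc23 hc24 hc26 hc27 hc29 hc30 hc32 hq5_30 hq5_32 hq7_29 hq11_28 hq12_27 hq12_32 hq16_30 hq17_29 hq22_26 hq23_25 hq23_27 hq24_26 ht0_9_19 ht0_23_26 ht1_8_32 ht2_12_29 ht3_10_30 ht3_18_27 ht7_10_19 ht8_11_19 ht8_15_22 ht10_13_24 hb1 hb3 hb4 hb6 hb7 hb8 hb10 hb11 hb12 hb13 hb14 hb15 hb16 hb17 hb18 hb19 hb20 hb21 hb22 hb23 hb24 hb25 hb26 hb27 hb28 hb29 hb30 hb31 hb32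
          omega
      · clear hc4 hc6 hc7 hc9 hc11 hc12 hc16 hc17 hc18 hc19 hc20 hc21 hc23 hc25 hc26 hc27 hc28 hc29 hc31 hq4_31 hq6_31 hq7_29 hq11_28 hq12_27 hq12_32 hq16_25 hq16_30 hq17_29 hq21_28 hq22_26 hq23_25 hq23_27 hq24_26 ht0_5_31 ht0_9_19 ht0_23_26 ht1_20_25 ht2_12_29 ht2_16_28 ht3_18_27 ht4_15_18 ht6_13_20 ht7_10_19 ht8_11_19 ht9_17_20 ht9_18_21 hb1 hb3 hb4 hb6 hb7 hb8 hb9 hb10 hb11 hb12 hb13 hb14 hb15 hb16 hb17 hb18 hb19 hb20 hb21 hb22 hb23 hb24 hb25 hb26 hb27 hb28 hb29 hb30 hb31 hb32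
        omega
    · rcases hb5 with rfl|rfl
      · clear hc7 hc8 hc9 hc10 hc11 hc12 hc16 hc17 hc19 hc21 hc22 hc23 hc24 hc26 hc28 hc29 hc30 hc32 hq5_30 hq5_32 hq7_29 hq11_28 hq12_27 hq12_32 hq16_25 hq16_30 hq17_29 hq21_28 hq22_26 hq23_25 hq23_27 hq24_26 ht0_9_19 ht0_23_26 ht1_8_32 ht2_12_29 ht2_16_28 ht3_10_30 ht7_10_19 ht8_11_19 ht8_15_22 ht9_17_20 ht9_18_21 ht10_13_24 hb1 hb3 hb4 hb6 hb7 hb8 hb9 hb10 hb11 hb12 hb13 hb14 hb15 hb16 hb17 hb18 hb19 hb20 hb21 hb22 hb23 hb24 hb25 hb26 hb27 hb28 hb29 hb30 hb31 hb32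
        omega
      · rcases hb9 with rfl|rfl
        · clear hc4 hc6 hc12 hc13 hc15 hc16 hc17 hc18 hc20 hc21 hc22 hc23 hc24 hc25 hc26 hc27 hc28 hc29 hc31 hq4_31 hq6_31 hq7_29 hq11_28 hq12_27 hq12_32 hq16_25 hq16_30 hq17_29 hq21_28 hq22_26 hq23_25 hq23_27 hq24_26 ht0_5_31 ht0_23_26 ht1_20_25 ht2_12_29 ht2_13_15 ht2_16_28 ht3_18_27 ht4_15_18 ht6_13_20 ht8_15_22 ht9_17_20 ht9_18_21 ht10_13_24 hb1 hb3 hb4 hb6 hb7 hb8 hb10 hb11 hb12 hb13 hb14 hb15 hb16 hb17 hb18 hb19 hb20 hb21 hb22 hb23 hb24 hb25 hb26 hb27 hb28 hb29 hb30 hb31 hb32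
          omega
        · rcases hb23 with rfl|rfl
          · clear hc4 hc6 hc7 hc9 hc11 hc12 hc16 hc17 hc18 hc19 hc20 hc21 hc25 hc27 hc28 hc29 hc31 hq4_31 hq6_31 hq7_29 hq11_28 hq12_27 hq12_32 hq16_25 hq16_30 hq17_29 hq21_28 hq23_25 hq23_27 ht0_5_31 ht0_9_19 ht1_20_25 ht2_12_29 ht2_16_28 ht3_18_27 ht4_15_18 ht6_13_20 ht7_10_19 ht8_11_19 ht9_17_20 ht9_18_21 hb1 hb3 hb4 hb6 hb7 hb8 hb10 hb11 hb12 hb13 hb14 hb15 hb16 hb17 hb18 hb19 hb20 hb21 hb22 hb24 hb25 hb26 hb27 hb28 hb29 hb30 hb31 hb32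
            omega
          · clear hc4 hc5 hc6 hc7 hc8 hc10 hc11 hc12 hc13 hc15 hc16 hc19 hc22 hc24 hc26 hc28 hc29 hc30 hc31 hc32 hq4_31 hq5_30 hq5_32 hq6_31 hq7_29 hq11_28 hq12_27 hq12_32 hq16_25 hq16_30 hq17_29 hq21_28 hq22_26 hq24_26 ht0_5_31 ht0_9_19 ht0_23_26 ht1_8_32 ht2_12_29 ht2_13_15 ht2_16_28 ht3_10_30 ht4_15_18 ht6_13_20 ht7_10_19 ht8_11_19 ht8_15_22 ht10_13_24 hb1 hb3 hb4 hb6 hb7 hb8 hb10 hb11 hb12 hb13 hb14 hb15 hb16 hb17 hb18 hb19 hb20 hb21 hb22 hb24 hb25 hb26 hb27 hb28 hb29 hb30 hb31 hb32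
            omega
  · rcases hb1 with rfl|rfl
    · clear hc4 hc5 hc11 hc17 hc23 hc24 hc26 hc31 hq4_31 hq5_30 hq5_32 hq6_31 hq11_28 hq12_27 hq16_30 hq17_29 hq22_26 hq23_25 hq23_27 hq24_26 ht0_5_31 ht0_23_26 ht4_15_18 ht8_11_19 ht9_17_20 ht10_13_24 hb2 hb3 hb4 hb5 hb6 hb7 hb8 hb9 hb10 hb11 hb12 hb13 hb14 hb15 hb16 hb17 hb18 hb19 hb20 hb21 hb22 hb23 hb24 hb25 hb26 hb27 hb28 hb29 hb30 hb31 hb32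
      omega
    · clear hc5 hc6 hc7 hc21 hc22 hc23 hc26 hc31 hq4_31 hq5_30 hq5_32 hq6_31 hq7_29 hq12_32 hq16_25 hq21_28 hq22_26 hq23_25 hq23_27 hq24_26 ht0_5_31 ht0_23_26 ht6_13_20 ht7_10_19 ht8_15_22 ht9_18_21 hb2 hb3 hb4 hb5 hb6 hb7 hb8 hb9 hb10 hb11 hb12 hb13 hb14 hb15 hb16 hb17 hb18 hb19 hb20 hb21 hb22 hb23 hb24 hb25 hb26 hb27 hb28 hb29 hb30 hb31 hb32
      omega

theorem kscore (n : ℕ) (hn : 3 ≤ n) (ζ : Matrix (Fin n) (Fin n) ℂ → ℂ)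
    (hadm : ∀ a b : Matrix (Fin n) (Fin n) ℂ, IsStarNormal a → IsStarNormal b → Commute a b →
      ζ (a + b) = ζ a + ζ b ∧ ζ (a * b) = ζ a * ζ b)
    (hE : ζ (E n) = 1) : False := by
  obtain ⟨m0, hc0, hb0⟩ : ∃ m : ℤ, (m : ℂ) = ζ (P n 0 0 1) ∧ (m = 0 ∨ m = 1) := by
    rcases zeta_proj_val ζ hadm (P_sa (n := n) 0 0 1) (P_idem hn 0 0 1 (by norm_num)) with h | h
    · exact ⟨0, by rw [h]; norm_num, Or.inl rfl⟩
    · exact ⟨1, by rw [h]; norm_num, Or.inr rfl⟩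
  obtain ⟨m1, hc1, hb1⟩ : ∃ m : ℤ, (m : ℂ) = ζ (P n 0 1 (-1)) ∧ (m = 0 ∨ m = 1) := by
    rcases zeta_proj_val ζ hadm (P_sa (n := n) 0 1 (-1)) (P_idem hn 0 1 (-1) (by norm_num)) with h | h
    · exact ⟨0, by rw [h]; norm_num, Or.inl rfl⟩
    · exact ⟨1, by rw [h]; norm_num, Or.inr rfl⟩
  obtain ⟨m2, hc2, hb2⟩ : ∃ m : ℤ, (m : ℂ) = ζ (P n 0 1 0) ∧ (m = 0 ∨ m = 1) := by
    rcases zeta_proj_val ζ hadm (P_sa (n := n) 0 1 0) (P_idem hn 0 1 0 (by norm_num)) with h | h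
    · exact ⟨0, by rw [h]; norm_num, Or.inl rfl⟩
    · exact ⟨1, by rw [h]; norm_num, Or.inr rfl⟩
  obtain ⟨m3, hc3, hb3⟩ : ∃ m : ℤ, (m : ℂ) = ζ (P n 0 1 1) ∧ (m = 0 ∨ m = 1) := by
    rcases zeta_proj_val ζ hadm (P_sa (n := n) 0 1 1) (P_idem hn 0 1 1 (by norm_num)) with h | h
    · exact ⟨0, by rw [h]; norm_num, Or.inl rfl⟩
    · exact ⟨1, by rw [h]; norm_num, Or.inr rfl⟩
  obtain ⟨m4, hc4, hb4⟩ : ∃ m : ℤ, (m : ℂ) = ζ (P n 1 (-2) (-1)) ∧ (m = 0 ∨ m = 1) := by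
    rcases zeta_proj_val ζ hadm (P_sa (n := n) 1 (-2) (-1)) (P_idem hn 1 (-2) (-1) (by norm_num)) with h | h
    · exact ⟨0, by rw [h]; norm_num, Or.inl rfl⟩
    · exact ⟨1, by rw [h]; norm_num, Or.inr rfl⟩
  obtain ⟨m5, hc5, hb5⟩ : ∃ m : ℤ, (m : ℂ) = ζ (P n 1 (-2) 0) ∧ (m = 0 ∨ m = 1) := by
    rcases zeta_proj_val ζ hadm (P_sa (n := n) 1 (-2) 0) (P_idem hn 1 (-2) 0 (by norm_num)) with h | h
    · exact ⟨0, by rw [h]; norm_num, Or.inl rfl⟩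
    · exact ⟨1, by rw [h]; norm_num, Or.inr rfl⟩
  obtain ⟨m6, hc6, hb6⟩ : ∃ m : ℤ, (m : ℂ) = ζ (P n 1 (-2) 1) ∧ (m = 0 ∨ m = 1) := by
    rcases zeta_proj_val ζ hadm (P_sa (n := n) 1 (-2) 1) (P_idem hn 1 (-2) 1 (by norm_num)) with h | h
    · exact ⟨0, by rw [h]; norm_num, Or.inl rfl⟩
    · exact ⟨1, by rw [h]; norm_num, Or.inr rfl⟩
  obtain ⟨m7, hc7, hb7⟩ : ∃ m : ℤ, (m : ℂ) = ζ (P n 1 (-1) (-2)) ∧ (m = 0 ∨ m = 1) := by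
    rcases zeta_proj_val ζ hadm (P_sa (n := n) 1 (-1) (-2)) (P_idem hn 1 (-1) (-2) (by norm_num)) with h | h
    · exact ⟨0, by rw [h]; norm_num, Or.inl rfl⟩
    · exact ⟨1, by rw [h]; norm_num, Or.inr rfl⟩
  obtain ⟨m8, hc8, hb8⟩ : ∃ m : ℤ, (m : ℂ) = ζ (P n 1 (-1) (-1)) ∧ (m = 0 ∨ m = 1) := by
    rcases zeta_proj_val ζ hadm (P_sa (n := n) 1 (-1) (-1)) (P_idem hn 1 (-1) (-1) (by norm_num)) with h | h
    · exact ⟨0, by rw [h]; norm_num, Or.inl rfl⟩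
    · exact ⟨1, by rw [h]; norm_num, Or.inr rfl⟩
  obtain ⟨m9, hc9, hb9⟩ : ∃ m : ℤ, (m : ℂ) = ζ (P n 1 (-1) 0) ∧ (m = 0 ∨ m = 1) := by
    rcases zeta_proj_val ζ hadm (P_sa (n := n) 1 (-1) 0) (P_idem hn 1 (-1) 0 (by norm_num)) with h | h
    · exact ⟨0, by rw [h]; norm_num, Or.inl rfl⟩
    · exact ⟨1, by rw [h]; norm_num, Or.inr rfl⟩
  obtain ⟨m10, hc10, hb10⟩ : ∃ m : ℤ, (m : ℂ) = ζ (P n 1 (-1) 1) ∧ (m = 0 ∨ m = 1) := by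
    rcases zeta_proj_val ζ hadm (P_sa (n := n) 1 (-1) 1) (P_idem hn 1 (-1) 1 (by norm_num)) with h | h
    · exact ⟨0, by rw [h]; norm_num, Or.inl rfl⟩
    · exact ⟨1, by rw [h]; norm_num, Or.inr rfl⟩
  obtain ⟨m11, hc11, hb11⟩ : ∃ m : ℤ, (m : ℂ) = ζ (P n 1 (-1) 2) ∧ (m = 0 ∨ m = 1) := by
    rcases zeta_proj_val ζ hadm (P_sa (n := n) 1 (-1) 2) (P_idem hn 1 (-1) 2 (by norm_num)) with h | h
    · exact ⟨0, by rw [h]; norm_num, Or.inl rfl⟩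
    · exact ⟨1, by rw [h]; norm_num, Or.inr rfl⟩
  obtain ⟨m12, hc12, hb12⟩ : ∃ m : ℤ, (m : ℂ) = ζ (P n 1 0 (-2)) ∧ (m = 0 ∨ m = 1) := by
    rcases zeta_proj_val ζ hadm (P_sa (n := n) 1 0 (-2)) (P_idem hn 1 0 (-2) (by norm_num)) with h | h
    · exact ⟨0, by rw [h]; norm_num, Or.inl rfl⟩
    · exact ⟨1, by rw [h]; norm_num, Or.inr rfl⟩
  obtain ⟨m13, hc13, hb13⟩ : ∃ m : ℤ, (m : ℂ) = ζ (P n 1 0 (-1)) ∧ (m = 0 ∨ m = 1) := by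
    rcases zeta_proj_val ζ hadm (P_sa (n := n) 1 0 (-1)) (P_idem hn 1 0 (-1) (by norm_num)) with h | h
    · exact ⟨0, by rw [h]; norm_num, Or.inl rfl⟩
    · exact ⟨1, by rw [h]; norm_num, Or.inr rfl⟩
  obtain ⟨m14, hc14, hb14⟩ : ∃ m : ℤ, (m : ℂ) = ζ (P n 1 0 0) ∧ (m = 0 ∨ m = 1) := by
    rcases zeta_proj_val ζ hadm (P_sa (n := n) 1 0 0) (P_idem hn 1 0 0 (by norm_num)) with h | h
    · exact ⟨0, by rw [h]; norm_num, Or.inl rfl⟩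
    · exact ⟨1, by rw [h]; norm_num, Or.inr rfl⟩
  obtain ⟨m15, hc15, hb15⟩ : ∃ m : ℤ, (m : ℂ) = ζ (P n 1 0 1) ∧ (m = 0 ∨ m = 1) := by
    rcases zeta_proj_val ζ hadm (P_sa (n := n) 1 0 1) (P_idem hn 1 0 1 (by norm_num)) with h | h
    · exact ⟨0, by rw [h]; norm_num, Or.inl rfl⟩
    · exact ⟨1, by rw [h]; norm_num, Or.inr rfl⟩
  obtain ⟨m16, hc16, hb16⟩ : ∃ m : ℤ, (m : ℂ) = ζ (P n 1 0 2) ∧ (m = 0 ∨ m = 1) := by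
    rcases zeta_proj_val ζ hadm (P_sa (n := n) 1 0 2) (P_idem hn 1 0 2 (by norm_num)) with h | h
    · exact ⟨0, by rw [h]; norm_num, Or.inl rfl⟩
    · exact ⟨1, by rw [h]; norm_num, Or.inr rfl⟩
  obtain ⟨m17, hc17, hb17⟩ : ∃ m : ℤ, (m : ℂ) = ζ (P n 1 1 (-2)) ∧ (m = 0 ∨ m = 1) := by
    rcases zeta_proj_val ζ hadm (P_sa (n := n) 1 1 (-2)) (P_idem hn 1 1 (-2) (by norm_num)) with h | h
    · exact ⟨0, by rw [h]; norm_num, Or.inl rfl⟩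
    · exact ⟨1, by rw [h]; norm_num, Or.inr rfl⟩
  obtain ⟨m18, hc18, hb18⟩ : ∃ m : ℤ, (m : ℂ) = ζ (P n 1 1 (-1)) ∧ (m = 0 ∨ m = 1) := by
    rcases zeta_proj_val ζ hadm (P_sa (n := n) 1 1 (-1)) (P_idem hn 1 1 (-1) (by norm_num)) with h | h
    · exact ⟨0, by rw [h]; norm_num, Or.inl rfl⟩
    · exact ⟨1, by rw [h]; norm_num, Or.inr rfl⟩
  obtain ⟨m19, hc19, hb19⟩ : ∃ m : ℤ, (m : ℂ) = ζ (P n 1 1 0) ∧ (m = 0 ∨ m = 1) := by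
    rcases zeta_proj_val ζ hadm (P_sa (n := n) 1 1 0) (P_idem hn 1 1 0 (by norm_num)) with h | h
    · exact ⟨0, by rw [h]; norm_num, Or.inl rfl⟩
    · exact ⟨1, by rw [h]; norm_num, Or.inr rfl⟩
  obtain ⟨m20, hc20, hb20⟩ : ∃ m : ℤ, (m : ℂ) = ζ (P n 1 1 1) ∧ (m = 0 ∨ m = 1) := by
    rcases zeta_proj_val ζ hadm (P_sa (n := n) 1 1 1) (P_idem hn 1 1 1 (by norm_num)) with h | h
    · exact ⟨0, by rw [h]; norm_num, Or.inl rfl⟩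
    · exact ⟨1, by rw [h]; norm_num, Or.inr rfl⟩
  obtain ⟨m21, hc21, hb21⟩ : ∃ m : ℤ, (m : ℂ) = ζ (P n 1 1 2) ∧ (m = 0 ∨ m = 1) := by
    rcases zeta_proj_val ζ hadm (P_sa (n := n) 1 1 2) (P_idem hn 1 1 2 (by norm_num)) with h | h
    · exact ⟨0, by rw [h]; norm_num, Or.inl rfl⟩
    · exact ⟨1, by rw [h]; norm_num, Or.inr rfl⟩
  obtain ⟨m22, hc22, hb22⟩ : ∃ m : ℤ, (m : ℂ) = ζ (P n 1 2 (-1)) ∧ (m = 0 ∨ m = 1) := by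
    rcases zeta_proj_val ζ hadm (P_sa (n := n) 1 2 (-1)) (P_idem hn 1 2 (-1) (by norm_num)) with h | h
    · exact ⟨0, by rw [h]; norm_num, Or.inl rfl⟩
    · exact ⟨1, by rw [h]; norm_num, Or.inr rfl⟩
  obtain ⟨m23, hc23, hb23⟩ : ∃ m : ℤ, (m : ℂ) = ζ (P n 1 2 0) ∧ (m = 0 ∨ m = 1) := by
    rcases zeta_proj_val ζ hadm (P_sa (n := n) 1 2 0) (P_idem hn 1 2 0 (by norm_num)) with h | h
    · exact ⟨0, by rw [h]; norm_num, Or.inl rfl⟩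
    · exact ⟨1, by rw [h]; norm_num, Or.inr rfl⟩
  obtain ⟨m24, hc24, hb24⟩ : ∃ m : ℤ, (m : ℂ) = ζ (P n 1 2 1) ∧ (m = 0 ∨ m = 1) := by
    rcases zeta_proj_val ζ hadm (P_sa (n := n) 1 2 1) (P_idem hn 1 2 1 (by norm_num)) with h | h
    · exact ⟨0, by rw [h]; norm_num, Or.inl rfl⟩
    · exact ⟨1, by rw [h]; norm_num, Or.inr rfl⟩
  obtain ⟨m25, hc25, hb25⟩ : ∃ m : ℤ, (m : ℂ) = ζ (P n 2 (-1) (-1)) ∧ (m = 0 ∨ m = 1) := by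
    rcases zeta_proj_val ζ hadm (P_sa (n := n) 2 (-1) (-1)) (P_idem hn 2 (-1) (-1) (by norm_num)) with h | h
    · exact ⟨0, by rw [h]; norm_num, Or.inl rfl⟩
    · exact ⟨1, by rw [h]; norm_num, Or.inr rfl⟩
  obtain ⟨m26, hc26, hb26⟩ : ∃ m : ℤ, (m : ℂ) = ζ (P n 2 (-1) 0) ∧ (m = 0 ∨ m = 1) := by
    rcases zeta_proj_val ζ hadm (P_sa (n := n) 2 (-1) 0) (P_idem hn 2 (-1) 0 (by norm_num)) with h | h
    · exact ⟨0, by rw [h]; norm_num, Or.inl rfl⟩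
    · exact ⟨1, by rw [h]; norm_num, Or.inr rfl⟩
  obtain ⟨m27, hc27, hb27⟩ : ∃ m : ℤ, (m : ℂ) = ζ (P n 2 (-1) 1) ∧ (m = 0 ∨ m = 1) := by
    rcases zeta_proj_val ζ hadm (P_sa (n := n) 2 (-1) 1) (P_idem hn 2 (-1) 1 (by norm_num)) with h | h
    · exact ⟨0, by rw [h]; norm_num, Or.inl rfl⟩
    · exact ⟨1, by rw [h]; norm_num, Or.inr rfl⟩
  obtain ⟨m28, hc28, hb28⟩ : ∃ m : ℤ, (m : ℂ) = ζ (P n 2 0 (-1)) ∧ (m = 0 ∨ m = 1) := by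
    rcases zeta_proj_val ζ hadm (P_sa (n := n) 2 0 (-1)) (P_idem hn 2 0 (-1) (by norm_num)) with h | h
    · exact ⟨0, by rw [h]; norm_num, Or.inl rfl⟩
    · exact ⟨1, by rw [h]; norm_num, Or.inr rfl⟩
  obtain ⟨m29, hc29, hb29⟩ : ∃ m : ℤ, (m : ℂ) = ζ (P n 2 0 1) ∧ (m = 0 ∨ m = 1) := by
    rcases zeta_proj_val ζ hadm (P_sa (n := n) 2 0 1) (P_idem hn 2 0 1 (by norm_num)) with h | h
    · exact ⟨0, by rw [h]; norm_num, Or.inl rfl⟩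
    · exact ⟨1, by rw [h]; norm_num, Or.inr rfl⟩
  obtain ⟨m30, hc30, hb30⟩ : ∃ m : ℤ, (m : ℂ) = ζ (P n 2 1 (-1)) ∧ (m = 0 ∨ m = 1) := by
    rcases zeta_proj_val ζ hadm (P_sa (n := n) 2 1 (-1)) (P_idem hn 2 1 (-1) (by norm_num)) with h | h
    · exact ⟨0, by rw [h]; norm_num, Or.inl rfl⟩
    · exact ⟨1, by rw [h]; norm_num, Or.inr rfl⟩
  obtain ⟨m31, hc31, hb31⟩ : ∃ m : ℤ, (m : ℂ) = ζ (P n 2 1 0) ∧ (m = 0 ∨ m = 1) := by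
    rcases zeta_proj_val ζ hadm (P_sa (n := n) 2 1 0) (P_idem hn 2 1 0 (by norm_num)) with h | h
    · exact ⟨0, by rw [h]; norm_num, Or.inl rfl⟩
    · exact ⟨1, by rw [h]; norm_num, Or.inr rfl⟩
  obtain ⟨m32, hc32, hb32⟩ : ∃ m : ℤ, (m : ℂ) = ζ (P n 2 1 1) ∧ (m = 0 ∨ m = 1) := by
    rcases zeta_proj_val ζ hadm (P_sa (n := n) 2 1 1) (P_idem hn 2 1 1 (by norm_num)) with h | h
    · exact ⟨0, by rw [h]; norm_num, Or.inl rfl⟩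
    · exact ⟨1, by rw [h]; norm_num, Or.inr rfl⟩
  have hp4_31 : m4 = 0 ∨ m31 = 0 := by
    have h := zeta_orth ζ hadm (P_sa (n := n) 1 (-2) (-1)) (P_sa (n := n) 2 1 0)
      (P_mul hn 1 (-2) (-1) 2 1 0 (by norm_num)) (P_mul hn 2 1 0 1 (-2) (-1) (by norm_num))
    have h2 : (m4 * m31 : ℤ) = 0 := by
      have h3 : (m4 : ℂ) * (m31 : ℂ) = 0 := by rw [hc4, hc31]; exact h
      exact_mod_cast h3
    exact mul_eq_zero.mp h2
  have hp5_30 : m5 = 0 ∨ m30 = 0 := by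
    have h := zeta_orth ζ hadm (P_sa (n := n) 1 (-2) 0) (P_sa (n := n) 2 1 (-1))
      (P_mul hn 1 (-2) 0 2 1 (-1) (by norm_num)) (P_mul hn 2 1 (-1) 1 (-2) 0 (by norm_num))
    have h2 : (m5 * m30 : ℤ) = 0 := by
      have h3 : (m5 : ℂ) * (m30 : ℂ) = 0 := by rw [hc5, hc30]; exact h
      exact_mod_cast h3
    exact mul_eq_zero.mp h2
  have hp5_32 : m5 = 0 ∨ m32 = 0 := by
    have h := zeta_orth ζ hadm (P_sa (n := n) 1 (-2) 0) (P_sa (n := n) 2 1 1)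
      (P_mul hn 1 (-2) 0 2 1 1 (by norm_num)) (P_mul hn 2 1 1 1 (-2) 0 (by norm_num))
    have h2 : (m5 * m32 : ℤ) = 0 := by
      have h3 : (m5 : ℂ) * (m32 : ℂ) = 0 := by rw [hc5, hc32]; exact h
      exact_mod_cast h3
    exact mul_eq_zero.mp h2
  have hp6_31 : m6 = 0 ∨ m31 = 0 := by
    have h := zeta_orth ζ hadm (P_sa (n := n) 1 (-2) 1) (P_sa (n := n) 2 1 0)
      (P_mul hn 1 (-2) 1 2 1 0 (by norm_num)) (P_mul hn 2 1 0 1 (-2) 1 (by norm_num))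
    have h2 : (m6 * m31 : ℤ) = 0 := by
      have h3 : (m6 : ℂ) * (m31 : ℂ) = 0 := by rw [hc6, hc31]; exact h
      exact_mod_cast h3
    exact mul_eq_zero.mp h2
  have hp7_29 : m7 = 0 ∨ m29 = 0 := by
    have h := zeta_orth ζ hadm (P_sa (n := n) 1 (-1) (-2)) (P_sa (n := n) 2 0 1)
      (P_mul hn 1 (-1) (-2) 2 0 1 (by norm_num)) (P_mul hn 2 0 1 1 (-1) (-2) (by norm_num))
    have h2 : (m7 * m29 : ℤ) = 0 := by
      have h3 : (m7 : ℂ) * (m29 : ℂ) = 0 := by rw [hc7, hc29]; exact h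
      exact_mod_cast h3
    exact mul_eq_zero.mp h2
  have hp11_28 : m11 = 0 ∨ m28 = 0 := by
    have h := zeta_orth ζ hadm (P_sa (n := n) 1 (-1) 2) (P_sa (n := n) 2 0 (-1))
      (P_mul hn 1 (-1) 2 2 0 (-1) (by norm_num)) (P_mul hn 2 0 (-1) 1 (-1) 2 (by norm_num))
    have h2 : (m11 * m28 : ℤ) = 0 := by
      have h3 : (m11 : ℂ) * (m28 : ℂ) = 0 := by rw [hc11, hc28]; exact h
      exact_mod_cast h3
    exact mul_eq_zero.mp h2
  have hp12_27 : m12 = 0 ∨ m27 = 0 := by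
    have h := zeta_orth ζ hadm (P_sa (n := n) 1 0 (-2)) (P_sa (n := n) 2 (-1) 1)
      (P_mul hn 1 0 (-2) 2 (-1) 1 (by norm_num)) (P_mul hn 2 (-1) 1 1 0 (-2) (by norm_num))
    have h2 : (m12 * m27 : ℤ) = 0 := by
      have h3 : (m12 : ℂ) * (m27 : ℂ) = 0 := by rw [hc12, hc27]; exact h
      exact_mod_cast h3
    exact mul_eq_zero.mp h2
  have hp12_32 : m12 = 0 ∨ m32 = 0 := by
    have h := zeta_orth ζ hadm (P_sa (n := n) 1 0 (-2)) (P_sa (n := n) 2 1 1)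
      (P_mul hn 1 0 (-2) 2 1 1 (by norm_num)) (P_mul hn 2 1 1 1 0 (-2) (by norm_num))
    have h2 : (m12 * m32 : ℤ) = 0 := by
      have h3 : (m12 : ℂ) * (m32 : ℂ) = 0 := by rw [hc12, hc32]; exact h
      exact_mod_cast h3
    exact mul_eq_zero.mp h2
  have hp16_25 : m16 = 0 ∨ m25 = 0 := by
    have h := zeta_orth ζ hadm (P_sa (n := n) 1 0 2) (P_sa (n := n) 2 (-1) (-1))
      (P_mul hn 1 0 2 2 (-1) (-1) (by norm_num)) (P_mul hn 2 (-1) (-1) 1 0 2 (by norm_num))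
    have h2 : (m16 * m25 : ℤ) = 0 := by
      have h3 : (m16 : ℂ) * (m25 : ℂ) = 0 := by rw [hc16, hc25]; exact h
      exact_mod_cast h3
    exact mul_eq_zero.mp h2
  have hp16_30 : m16 = 0 ∨ m30 = 0 := by
    have h := zeta_orth ζ hadm (P_sa (n := n) 1 0 2) (P_sa (n := n) 2 1 (-1))
      (P_mul hn 1 0 2 2 1 (-1) (by norm_num)) (P_mul hn 2 1 (-1) 1 0 2 (by norm_num))
    have h2 : (m16 * m30 : ℤ) = 0 := by
      have h3 : (m16 : ℂ) * (m30 : ℂ) = 0 := by rw [hc16, hc30]; exact h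
      exact_mod_cast h3
    exact mul_eq_zero.mp h2
  have hp17_29 : m17 = 0 ∨ m29 = 0 := by
    have h := zeta_orth ζ hadm (P_sa (n := n) 1 1 (-2)) (P_sa (n := n) 2 0 1)
      (P_mul hn 1 1 (-2) 2 0 1 (by norm_num)) (P_mul hn 2 0 1 1 1 (-2) (by norm_num))
    have h2 : (m17 * m29 : ℤ) = 0 := by
      have h3 : (m17 : ℂ) * (m29 : ℂ) = 0 := by rw [hc17, hc29]; exact h
      exact_mod_cast h3
    exact mul_eq_zero.mp h2
  have hp21_28 : m21 = 0 ∨ m28 = 0 := by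
    have h := zeta_orth ζ hadm (P_sa (n := n) 1 1 2) (P_sa (n := n) 2 0 (-1))
      (P_mul hn 1 1 2 2 0 (-1) (by norm_num)) (P_mul hn 2 0 (-1) 1 1 2 (by norm_num))
    have h2 : (m21 * m28 : ℤ) = 0 := by
      have h3 : (m21 : ℂ) * (m28 : ℂ) = 0 := by rw [hc21, hc28]; exact h
      exact_mod_cast h3
    exact mul_eq_zero.mp h2
  have hp22_26 : m22 = 0 ∨ m26 = 0 := by
    have h := zeta_orth ζ hadm (P_sa (n := n) 1 2 (-1)) (P_sa (n := n) 2 (-1) 0)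
      (P_mul hn 1 2 (-1) 2 (-1) 0 (by norm_num)) (P_mul hn 2 (-1) 0 1 2 (-1) (by norm_num))
    have h2 : (m22 * m26 : ℤ) = 0 := by
      have h3 : (m22 : ℂ) * (m26 : ℂ) = 0 := by rw [hc22, hc26]; exact h
      exact_mod_cast h3
    exact mul_eq_zero.mp h2
  have hp23_25 : m23 = 0 ∨ m25 = 0 := by
    have h := zeta_orth ζ hadm (P_sa (n := n) 1 2 0) (P_sa (n := n) 2 (-1) (-1))
      (P_mul hn 1 2 0 2 (-1) (-1) (by norm_num)) (P_mul hn 2 (-1) (-1) 1 2 0 (by norm_num))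
    have h2 : (m23 * m25 : ℤ) = 0 := by
      have h3 : (m23 : ℂ) * (m25 : ℂ) = 0 := by rw [hc23, hc25]; exact h
      exact_mod_cast h3
    exact mul_eq_zero.mp h2
  have hp23_27 : m23 = 0 ∨ m27 = 0 := by
    have h := zeta_orth ζ hadm (P_sa (n := n) 1 2 0) (P_sa (n := n) 2 (-1) 1)
      (P_mul hn 1 2 0 2 (-1) 1 (by norm_num)) (P_mul hn 2 (-1) 1 1 2 0 (by norm_num))
    have h2 : (m23 * m27 : ℤ) = 0 := by
      have h3 : (m23 : ℂ) * (m27 : ℂ) = 0 := by rw [hc23, hc27]; exact h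
      exact_mod_cast h3
    exact mul_eq_zero.mp h2
  have hp24_26 : m24 = 0 ∨ m26 = 0 := by
    have h := zeta_orth ζ hadm (P_sa (n := n) 1 2 1) (P_sa (n := n) 2 (-1) 0)
      (P_mul hn 1 2 1 2 (-1) 0 (by norm_num)) (P_mul hn 2 (-1) 0 1 2 1 (by norm_num))
    have h2 : (m24 * m26 : ℤ) = 0 := by
      have h3 : (m24 : ℂ) * (m26 : ℂ) = 0 := by rw [hc24, hc26]; exact h
      exact_mod_cast h3
    exact mul_eq_zero.mp h2
  have ht0_2_14 : m0 + m2 + m14 = 1 := by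
    have h3 := zeta_add3 ζ hadm (P_sa (n := n) 0 0 1) (P_sa (n := n) 0 1 0) (P_sa (n := n) 1 0 0)
      (P_mul hn 0 0 1 0 1 0 (by norm_num)) (P_mul hn 0 1 0 0 0 1 (by norm_num))
      (P_mul hn 0 0 1 1 0 0 (by norm_num)) (P_mul hn 1 0 0 0 0 1 (by norm_num))
      (P_mul hn 0 1 0 1 0 0 (by norm_num)) (P_mul hn 1 0 0 0 1 0 (by norm_num))
    rw [triple hn 0 0 1 0 1 0 1 0 0 (by norm_num) (by norm_num) (by norm_num)
        (by norm_num) (by norm_num) (by norm_num)] at h3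
    rw [hE] at h3
    have h4 : ((m0 + m2 + m14 : ℤ) : ℂ) = ((1:ℤ) : ℂ) := by
      push_cast
      rw [hc0, hc2, hc14]
      exact h3.symm
    exact_mod_cast h4
  have ht0_5_31 : m0 + m5 + m31 = 1 := by
    have h3 := zeta_add3 ζ hadm (P_sa (n := n) 0 0 1) (P_sa (n := n) 1 (-2) 0) (P_sa (n := n) 2 1 0)
      (P_mul hn 0 0 1 1 (-2) 0 (by norm_num)) (P_mul hn 1 (-2) 0 0 0 1 (by norm_num))
      (P_mul hn 0 0 1 2 1 0 (by norm_num)) (P_mul hn 2 1 0 0 0 1 (by norm_num))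
      (P_mul hn 1 (-2) 0 2 1 0 (by norm_num)) (P_mul hn 2 1 0 1 (-2) 0 (by norm_num))
    rw [triple hn 0 0 1 1 (-2) 0 2 1 0 (by norm_num) (by norm_num) (by norm_num)
        (by norm_num) (by norm_num) (by norm_num)] at h3
    rw [hE] at h3
    have h4 : ((m0 + m5 + m31 : ℤ) : ℂ) = ((1:ℤ) : ℂ) := by
      push_cast
      rw [hc0, hc5, hc31]
      exact h3.symm
    exact_mod_cast h4
  have ht0_9_19 : m0 + m9 + m19 = 1 := by
    have h3 := zeta_add3 ζ hadm (P_sa (n := n) 0 0 1) (P_sa (n := n) 1 (-1) 0) (P_sa (n := n) 1 1 0)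
      (P_mul hn 0 0 1 1 (-1) 0 (by norm_num)) (P_mul hn 1 (-1) 0 0 0 1 (by norm_num))
      (P_mul hn 0 0 1 1 1 0 (by norm_num)) (P_mul hn 1 1 0 0 0 1 (by norm_num))
      (P_mul hn 1 (-1) 0 1 1 0 (by norm_num)) (P_mul hn 1 1 0 1 (-1) 0 (by norm_num))
    rw [triple hn 0 0 1 1 (-1) 0 1 1 0 (by norm_num) (by norm_num) (by norm_num)
        (by norm_num) (by norm_num) (by norm_num)] at h3
    rw [hE] at h3
    have h4 : ((m0 + m9 + m19 : ℤ) : ℂ) = ((1:ℤ) : ℂ) := by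
      push_cast
      rw [hc0, hc9, hc19]
      exact h3.symm
    exact_mod_cast h4
  have ht0_23_26 : m0 + m23 + m26 = 1 := by
    have h3 := zeta_add3 ζ hadm (P_sa (n := n) 0 0 1) (P_sa (n := n) 1 2 0) (P_sa (n := n) 2 (-1) 0)
      (P_mul hn 0 0 1 1 2 0 (by norm_num)) (P_mul hn 1 2 0 0 0 1 (by norm_num))
      (P_mul hn 0 0 1 2 (-1) 0 (by norm_num)) (P_mul hn 2 (-1) 0 0 0 1 (by norm_num))
      (P_mul hn 1 2 0 2 (-1) 0 (by norm_num)) (P_mul hn 2 (-1) 0 1 2 0 (by norm_num))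
    rw [triple hn 0 0 1 1 2 0 2 (-1) 0 (by norm_num) (by norm_num) (by norm_num)
        (by norm_num) (by norm_num) (by norm_num)] at h3
    rw [hE] at h3
    have h4 : ((m0 + m23 + m26 : ℤ) : ℂ) = ((1:ℤ) : ℂ) := by
      push_cast
      rw [hc0, hc23, hc26]
      exact h3.symm
    exact_mod_cast h4
  have ht1_3_14 : m1 + m3 + m14 = 1 := by
    have h3 := zeta_add3 ζ hadm (P_sa (n := n) 0 1 (-1)) (P_sa (n := n) 0 1 1) (P_sa (n := n) 1 0 0)
      (P_mul hn 0 1 (-1) 0 1 1 (by norm_num)) (P_mul hn 0 1 1 0 1 (-1) (by norm_num))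
      (P_mul hn 0 1 (-1) 1 0 0 (by norm_num)) (P_mul hn 1 0 0 0 1 (-1) (by norm_num))
      (P_mul hn 0 1 1 1 0 0 (by norm_num)) (P_mul hn 1 0 0 0 1 1 (by norm_num))
    rw [triple hn 0 1 (-1) 0 1 1 1 0 0 (by norm_num) (by norm_num) (by norm_num)
        (by norm_num) (by norm_num) (by norm_num)] at h3
    rw [hE] at h3
    have h4 : ((m1 + m3 + m14 : ℤ) : ℂ) = ((1:ℤ) : ℂ) := by
      push_cast
      rw [hc1, hc3, hc14]
      exact h3.symm
    exact_mod_cast h4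
  have ht1_8_32 : m1 + m8 + m32 = 1 := by
    have h3 := zeta_add3 ζ hadm (P_sa (n := n) 0 1 (-1)) (P_sa (n := n) 1 (-1) (-1)) (P_sa (n := n) 2 1 1)
      (P_mul hn 0 1 (-1) 1 (-1) (-1) (by norm_num)) (P_mul hn 1 (-1) (-1) 0 1 (-1) (by norm_num))
      (P_mul hn 0 1 (-1) 2 1 1 (by norm_num)) (P_mul hn 2 1 1 0 1 (-1) (by norm_num))
      (P_mul hn 1 (-1) (-1) 2 1 1 (by norm_num)) (P_mul hn 2 1 1 1 (-1) (-1) (by norm_num))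
    rw [triple hn 0 1 (-1) 1 (-1) (-1) 2 1 1 (by norm_num) (by norm_num) (by norm_num)
        (by norm_num) (by norm_num) (by norm_num)] at h3
    rw [hE] at h3
    have h4 : ((m1 + m8 + m32 : ℤ) : ℂ) = ((1:ℤ) : ℂ) := by
      push_cast
      rw [hc1, hc8, hc32]
      exact h3.symm
    exact_mod_cast h4
  have ht1_20_25 : m1 + m20 + m25 = 1 := by
    have h3 := zeta_add3 ζ hadm (P_sa (n := n) 0 1 (-1)) (P_sa (n := n) 1 1 1) (P_sa (n := n) 2 (-1) (-1))
      (P_mul hn 0 1 (-1) 1 1 1 (by norm_num)) (P_mul hn 1 1 1 0 1 (-1) (by norm_num))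
      (P_mul hn 0 1 (-1) 2 (-1) (-1) (by norm_num)) (P_mul hn 2 (-1) (-1) 0 1 (-1) (by norm_num))
      (P_mul hn 1 1 1 2 (-1) (-1) (by norm_num)) (P_mul hn 2 (-1) (-1) 1 1 1 (by norm_num))
    rw [triple hn 0 1 (-1) 1 1 1 2 (-1) (-1) (by norm_num) (by norm_num) (by norm_num)
        (by norm_num) (by norm_num) (by norm_num)] at h3
    rw [hE] at h3
    have h4 : ((m1 + m20 + m25 : ℤ) : ℂ) = ((1:ℤ) : ℂ) := by
      push_cast
      rw [hc1, hc20, hc25]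
      exact h3.symm
    exact_mod_cast h4
  have ht2_12_29 : m2 + m12 + m29 = 1 := by
    have h3 := zeta_add3 ζ hadm (P_sa (n := n) 0 1 0) (P_sa (n := n) 1 0 (-2)) (P_sa (n := n) 2 0 1)
      (P_mul hn 0 1 0 1 0 (-2) (by norm_num)) (P_mul hn 1 0 (-2) 0 1 0 (by norm_num))
      (P_mul hn 0 1 0 2 0 1 (by norm_num)) (P_mul hn 2 0 1 0 1 0 (by norm_num))
      (P_mul hn 1 0 (-2) 2 0 1 (by norm_num)) (P_mul hn 2 0 1 1 0 (-2) (by norm_num))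
    rw [triple hn 0 1 0 1 0 (-2) 2 0 1 (by norm_num) (by norm_num) (by norm_num)
        (by norm_num) (by norm_num) (by norm_num)] at h3
    rw [hE] at h3
    have h4 : ((m2 + m12 + m29 : ℤ) : ℂ) = ((1:ℤ) : ℂ) := by
      push_cast
      rw [hc2, hc12, hc29]
      exact h3.symm
    exact_mod_cast h4
  have ht2_13_15 : m2 + m13 + m15 = 1 := by
    have h3 := zeta_add3 ζ hadm (P_sa (n := n) 0 1 0) (P_sa (n := n) 1 0 (-1)) (P_sa (n := n) 1 0 1)
      (P_mul hn 0 1 0 1 0 (-1) (by norm_num)) (P_mul hn 1 0 (-1) 0 1 0 (by norm_num))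
      (P_mul hn 0 1 0 1 0 1 (by norm_num)) (P_mul hn 1 0 1 0 1 0 (by norm_num))
      (P_mul hn 1 0 (-1) 1 0 1 (by norm_num)) (P_mul hn 1 0 1 1 0 (-1) (by norm_num))
    rw [triple hn 0 1 0 1 0 (-1) 1 0 1 (by norm_num) (by norm_num) (by norm_num)
        (by norm_num) (by norm_num) (by norm_num)] at h3
    rw [hE] at h3
    have h4 : ((m2 + m13 + m15 : ℤ) : ℂ) = ((1:ℤ) : ℂ) := by
      push_cast
      rw [hc2, hc13, hc15]
      exact h3.symm
    exact_mod_cast h4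
  have ht2_16_28 : m2 + m16 + m28 = 1 := by
    have h3 := zeta_add3 ζ hadm (P_sa (n := n) 0 1 0) (P_sa (n := n) 1 0 2) (P_sa (n := n) 2 0 (-1))
      (P_mul hn 0 1 0 1 0 2 (by norm_num)) (P_mul hn 1 0 2 0 1 0 (by norm_num))
      (P_mul hn 0 1 0 2 0 (-1) (by norm_num)) (P_mul hn 2 0 (-1) 0 1 0 (by norm_num))
      (P_mul hn 1 0 2 2 0 (-1) (by norm_num)) (P_mul hn 2 0 (-1) 1 0 2 (by norm_num))
    rw [triple hn 0 1 0 1 0 2 2 0 (-1) (by norm_num) (by norm_num) (by norm_num)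
        (by norm_num) (by norm_num) (by norm_num)] at h3
    rw [hE] at h3
    have h4 : ((m2 + m16 + m28 : ℤ) : ℂ) = ((1:ℤ) : ℂ) := by
      push_cast
      rw [hc2, hc16, hc28]
      exact h3.symm
    exact_mod_cast h4
  have ht3_10_30 : m3 + m10 + m30 = 1 := by
    have h3 := zeta_add3 ζ hadm (P_sa (n := n) 0 1 1) (P_sa (n := n) 1 (-1) 1) (P_sa (n := n) 2 1 (-1))
      (P_mul hn 0 1 1 1 (-1) 1 (by norm_num)) (P_mul hn 1 (-1) 1 0 1 1 (by norm_num))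
      (P_mul hn 0 1 1 2 1 (-1) (by norm_num)) (P_mul hn 2 1 (-1) 0 1 1 (by norm_num))
      (P_mul hn 1 (-1) 1 2 1 (-1) (by norm_num)) (P_mul hn 2 1 (-1) 1 (-1) 1 (by norm_num))
    rw [triple hn 0 1 1 1 (-1) 1 2 1 (-1) (by norm_num) (by norm_num) (by norm_num)
        (by norm_num) (by norm_num) (by norm_num)] at h3
    rw [hE] at h3
    have h4 : ((m3 + m10 + m30 : ℤ) : ℂ) = ((1:ℤ) : ℂ) := by
      push_cast
      rw [hc3, hc10, hc30]
      exact h3.symm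
    exact_mod_cast h4
  have ht3_18_27 : m3 + m18 + m27 = 1 := by
    have h3 := zeta_add3 ζ hadm (P_sa (n := n) 0 1 1) (P_sa (n := n) 1 1 (-1)) (P_sa (n := n) 2 (-1) 1)
      (P_mul hn 0 1 1 1 1 (-1) (by norm_num)) (P_mul hn 1 1 (-1) 0 1 1 (by norm_num))
      (P_mul hn 0 1 1 2 (-1) 1 (by norm_num)) (P_mul hn 2 (-1) 1 0 1 1 (by norm_num))
      (P_mul hn 1 1 (-1) 2 (-1) 1 (by norm_num)) (P_mul hn 2 (-1) 1 1 1 (-1) (by norm_num))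
    rw [triple hn 0 1 1 1 1 (-1) 2 (-1) 1 (by norm_num) (by norm_num) (by norm_num)
        (by norm_num) (by norm_num) (by norm_num)] at h3
    rw [hE] at h3
    have h4 : ((m3 + m18 + m27 : ℤ) : ℂ) = ((1:ℤ) : ℂ) := by
      push_cast
      rw [hc3, hc18, hc27]
      exact h3.symm
    exact_mod_cast h4
  have ht4_15_18 : m4 + m15 + m18 = 1 := by
    have h3 := zeta_add3 ζ hadm (P_sa (n := n) 1 (-2) (-1)) (P_sa (n := n) 1 0 1) (P_sa (n := n) 1 1 (-1))
      (P_mul hn 1 (-2) (-1) 1 0 1 (by norm_num)) (P_mul hn 1 0 1 1 (-2) (-1) (by norm_num))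
      (P_mul hn 1 (-2) (-1) 1 1 (-1) (by norm_num)) (P_mul hn 1 1 (-1) 1 (-2) (-1) (by norm_num))
      (P_mul hn 1 0 1 1 1 (-1) (by norm_num)) (P_mul hn 1 1 (-1) 1 0 1 (by norm_num))
    rw [triple hn 1 (-2) (-1) 1 0 1 1 1 (-1) (by norm_num) (by norm_num) (by norm_num)
        (by norm_num) (by norm_num) (by norm_num)] at h3
    rw [hE] at h3
    have h4 : ((m4 + m15 + m18 : ℤ) : ℂ) = ((1:ℤ) : ℂ) := by
      push_cast
      rw [hc4, hc15, hc18]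
      exact h3.symm
    exact_mod_cast h4
  have ht6_13_20 : m6 + m13 + m20 = 1 := by
    have h3 := zeta_add3 ζ hadm (P_sa (n := n) 1 (-2) 1) (P_sa (n := n) 1 0 (-1)) (P_sa (n := n) 1 1 1)
      (P_mul hn 1 (-2) 1 1 0 (-1) (by norm_num)) (P_mul hn 1 0 (-1) 1 (-2) 1 (by norm_num))
      (P_mul hn 1 (-2) 1 1 1 1 (by norm_num)) (P_mul hn 1 1 1 1 (-2) 1 (by norm_num))
      (P_mul hn 1 0 (-1) 1 1 1 (by norm_num)) (P_mul hn 1 1 1 1 0 (-1) (by norm_num))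
    rw [triple hn 1 (-2) 1 1 0 (-1) 1 1 1 (by norm_num) (by norm_num) (by norm_num)
        (by norm_num) (by norm_num) (by norm_num)] at h3
    rw [hE] at h3
    have h4 : ((m6 + m13 + m20 : ℤ) : ℂ) = ((1:ℤ) : ℂ) := by
      push_cast
      rw [hc6, hc13, hc20]
      exact h3.symm
    exact_mod_cast h4
  have ht7_10_19 : m7 + m10 + m19 = 1 := by
    have h3 := zeta_add3 ζ hadm (P_sa (n := n) 1 (-1) (-2)) (P_sa (n := n) 1 (-1) 1) (P_sa (n := n) 1 1 0)
      (P_mul hn 1 (-1) (-2) 1 (-1) 1 (by norm_num)) (P_mul hn 1 (-1) 1 1 (-1) (-2) (by norm_num))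
      (P_mul hn 1 (-1) (-2) 1 1 0 (by norm_num)) (P_mul hn 1 1 0 1 (-1) (-2) (by norm_num))
      (P_mul hn 1 (-1) 1 1 1 0 (by norm_num)) (P_mul hn 1 1 0 1 (-1) 1 (by norm_num))
    rw [triple hn 1 (-1) (-2) 1 (-1) 1 1 1 0 (by norm_num) (by norm_num) (by norm_num)
        (by norm_num) (by norm_num) (by norm_num)] at h3
    rw [hE] at h3
    have h4 : ((m7 + m10 + m19 : ℤ) : ℂ) = ((1:ℤ) : ℂ) := by
      push_cast
      rw [hc7, hc10, hc19]
      exact h3.symm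
    exact_mod_cast h4
  have ht8_11_19 : m8 + m11 + m19 = 1 := by
    have h3 := zeta_add3 ζ hadm (P_sa (n := n) 1 (-1) (-1)) (P_sa (n := n) 1 (-1) 2) (P_sa (n := n) 1 1 0)
      (P_mul hn 1 (-1) (-1) 1 (-1) 2 (by norm_num)) (P_mul hn 1 (-1) 2 1 (-1) (-1) (by norm_num))
      (P_mul hn 1 (-1) (-1) 1 1 0 (by norm_num)) (P_mul hn 1 1 0 1 (-1) (-1) (by norm_num))
      (P_mul hn 1 (-1) 2 1 1 0 (by norm_num)) (P_mul hn 1 1 0 1 (-1) 2 (by norm_num))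
    rw [triple hn 1 (-1) (-1) 1 (-1) 2 1 1 0 (by norm_num) (by norm_num) (by norm_num)
        (by norm_num) (by norm_num) (by norm_num)] at h3
    rw [hE] at h3
    have h4 : ((m8 + m11 + m19 : ℤ) : ℂ) = ((1:ℤ) : ℂ) := by
      push_cast
      rw [hc8, hc11, hc19]
      exact h3.symm
    exact_mod_cast h4
  have ht8_15_22 : m8 + m15 + m22 = 1 := by
    have h3 := zeta_add3 ζ hadm (P_sa (n := n) 1 (-1) (-1)) (P_sa (n := n) 1 0 1) (P_sa (n := n) 1 2 (-1))
      (P_mul hn 1 (-1) (-1) 1 0 1 (by norm_num)) (P_mul hn 1 0 1 1 (-1) (-1) (by norm_num))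
      (P_mul hn 1 (-1) (-1) 1 2 (-1) (by norm_num)) (P_mul hn 1 2 (-1) 1 (-1) (-1) (by norm_num))
      (P_mul hn 1 0 1 1 2 (-1) (by norm_num)) (P_mul hn 1 2 (-1) 1 0 1 (by norm_num))
    rw [triple hn 1 (-1) (-1) 1 0 1 1 2 (-1) (by norm_num) (by norm_num) (by norm_num)
        (by norm_num) (by norm_num) (by norm_num)] at h3
    rw [hE] at h3
    have h4 : ((m8 + m15 + m22 : ℤ) : ℂ) = ((1:ℤ) : ℂ) := by
      push_cast
      rw [hc8, hc15, hc22]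
      exact h3.symm
    exact_mod_cast h4
  have ht9_17_20 : m9 + m17 + m20 = 1 := by
    have h3 := zeta_add3 ζ hadm (P_sa (n := n) 1 (-1) 0) (P_sa (n := n) 1 1 (-2)) (P_sa (n := n) 1 1 1)
      (P_mul hn 1 (-1) 0 1 1 (-2) (by norm_num)) (P_mul hn 1 1 (-2) 1 (-1) 0 (by norm_num))
      (P_mul hn 1 (-1) 0 1 1 1 (by norm_num)) (P_mul hn 1 1 1 1 (-1) 0 (by norm_num))
      (P_mul hn 1 1 (-2) 1 1 1 (by norm_num)) (P_mul hn 1 1 1 1 1 (-2) (by norm_num))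
    rw [triple hn 1 (-1) 0 1 1 (-2) 1 1 1 (by norm_num) (by norm_num) (by norm_num)
        (by norm_num) (by norm_num) (by norm_num)] at h3
    rw [hE] at h3
    have h4 : ((m9 + m17 + m20 : ℤ) : ℂ) = ((1:ℤ) : ℂ) := by
      push_cast
      rw [hc9, hc17, hc20]
      exact h3.symm
    exact_mod_cast h4
  have ht9_18_21 : m9 + m18 + m21 = 1 := by
    have h3 := zeta_add3 ζ hadm (P_sa (n := n) 1 (-1) 0) (P_sa (n := n) 1 1 (-1)) (P_sa (n := n) 1 1 2)
      (P_mul hn 1 (-1) 0 1 1 (-1) (by norm_num)) (P_mul hn 1 1 (-1) 1 (-1) 0 (by norm_num))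
      (P_mul hn 1 (-1) 0 1 1 2 (by norm_num)) (P_mul hn 1 1 2 1 (-1) 0 (by norm_num))
      (P_mul hn 1 1 (-1) 1 1 2 (by norm_num)) (P_mul hn 1 1 2 1 1 (-1) (by norm_num))
    rw [triple hn 1 (-1) 0 1 1 (-1) 1 1 2 (by norm_num) (by norm_num) (by norm_num)
        (by norm_num) (by norm_num) (by norm_num)] at h3
    rw [hE] at h3
    have h4 : ((m9 + m18 + m21 : ℤ) : ℂ) = ((1:ℤ) : ℂ) := by
      push_cast
      rw [hc9, hc18, hc21]
      exact h3.symm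
    exact_mod_cast h4
  have ht10_13_24 : m10 + m13 + m24 = 1 := by
    have h3 := zeta_add3 ζ hadm (P_sa (n := n) 1 (-1) 1) (P_sa (n := n) 1 0 (-1)) (P_sa (n := n) 1 2 1)
      (P_mul hn 1 (-1) 1 1 0 (-1) (by norm_num)) (P_mul hn 1 0 (-1) 1 (-1) 1 (by norm_num))
      (P_mul hn 1 (-1) 1 1 2 1 (by norm_num)) (P_mul hn 1 2 1 1 (-1) 1 (by norm_num))
      (P_mul hn 1 0 (-1) 1 2 1 (by norm_num)) (P_mul hn 1 2 1 1 0 (-1) (by norm_num))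
    rw [triple hn 1 (-1) 1 1 0 (-1) 1 2 1 (by norm_num) (by norm_num) (by norm_num)
        (by norm_num) (by norm_num) (by norm_num)] at h3
    rw [hE] at h3
    have h4 : ((m10 + m13 + m24 : ℤ) : ℂ) = ((1:ℤ) : ℂ) := by
      push_cast
      rw [hc10, hc13, hc24]
      exact h3.symm
    exact_mod_cast h4
  exact kscomb m0 m1 m2 m3 m4 m5 m6 m7 m8 m9 m10 m11 m12 m13 m14 m15 m16 m17 m18 m19 m20 m21 m22 m23 m24 m25 m26 m27 m28 m29 m30 m31 m32 hb0 hb1 hb2 hb3 hb4 hb5 hb6 hb7 hb8 hb9 hb10 hb11 hb12 hb13 hb14 hb15 hb16 hb17 hb18 hb19 hb20 hb21 hb22 hb23 hb24 hb25 hb26 hb27 hb28 hb29 hb30 hb31 hb32 hp4_31 hp5_30 hp5_32 hp6_31 hp7_29 hp11_28 hp12_27 hp12_32 hp16_25 hp16_30 hp17_29 hp21_28 hp22_26 hp23_25 hp23_27 hp24_26 ht0_2_14 ht0_5_31 ht0_9_19 ht0_23_26 ht1_3_14 ht1_8_32 ht1_20_25 ht2_12_29 ht2_13_15 ht2_16_28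 ht3_10_30 ht3_18_27 ht4_15_18 ht6_13_20 ht7_10_19 ht8_11_19 ht8_15_22 ht9_17_20 ht9_18_21 ht10_13_24

def ee (n : ℕ) (k : Fin n) : Matrix (Fin n) (Fin n) ℂ :=
  Matrix.diagonal (fun i => if i = k then 1 else 0)

lemma ee_sa (k : Fin n) : (ee n k)ᴴ = ee n k := by
  unfold ee
  rw [Matrix.diagonal_conjTranspose]
  have : (star fun i : Fin n => if i = k then (1:ℂ) else 0) = fun i : Fin n => if i = k then (1:ℂ) else 0 := by
    funext i
    simp only [Pi.star_apply]
    split_ifs <;> simp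
  rw [this]

lemma ee_idem (k : Fin n) : ee n k * ee n k = ee n k := by
  unfold ee
  rw [Matrix.diagonal_mul_diagonal]
  have : (fun i : Fin n => (if i = k then (1:ℂ) else 0) * (if i = k then (1:ℂ) else 0))
      = fun i : Fin n => if i = k then (1:ℂ) else 0 := by
    funext i
    split_ifs <;> simp
  rw [this]

lemma ee_mul_ne {j k : Fin n} (h : j ≠ k) : ee n j * ee n k = 0 := by
  unfold ee
  rw [Matrix.diagonal_mul_diagonal]
  have : (fun i : Fin n => (if i = j then (1:ℂ) else 0) * (if i = k then (1:ℂ) else 0))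
      = fun _ : Fin n => (0:ℂ) := by
    funext i
    by_cases h1 : i = j
    · subst h1
      rw [if_pos rfl, if_neg h]
      simp
    · rw [if_neg h1]
      simp
  rw [this, Matrix.diagonal_zero]

lemma diag_normal (d : Fin n → ℂ) : IsStarNormal (Matrix.diagonal d) := by
  constructor
  show _ * _ = _ * _
  rw [Matrix.star_eq_conjTranspose, Matrix.diagonal_conjTranspose,
    Matrix.diagonal_mul_diagonal, Matrix.diagonal_mul_diagonal]
  exact congrArg Matrix.diagonal (funext fun i => mul_comm _ _)

lemma commute_diag (d e : Fin n → ℂ) : Commute (Matrix.diagonal d) (Matrix.diagonal e) := by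
  show _ * _ = _ * _
  rw [Matrix.diagonal_mul_diagonal, Matrix.diagonal_mul_diagonal]
  exact congrArg Matrix.diagonal (funext fun i => mul_comm _ _)

lemma E_eq_sum3 (hn : 3 ≤ n) :
    E n = ee n ⟨0, by omega⟩ + ee n ⟨1, by omega⟩ + ee n ⟨2, by omega⟩ := by
  unfold E ee
  rw [Matrix.diagonal_add, Matrix.diagonal_add]
  refine congrArg Matrix.diagonal (funext fun i => ?_)
  simp only [Pi.add_apply, Fin.ext_iff]
  split_ifs <;> first | (exfalso; omega) | norm_num

section Zeta2

variable (ζ : Matrix (Fin n) (Fin n) ℂ → ℂ)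
variable (hadm : ∀ a b : Matrix (Fin n) (Fin n) ℂ, IsStarNormal a → IsStarNormal b → Commute a b →
    ζ (a + b) = ζ a + ζ b ∧ ζ (a * b) = ζ a * ζ b)

include hadm

lemma zeta_diag_sum (S : Finset (Fin n)) :
    ζ (Matrix.diagonal (fun i => if i ∈ S then (1:ℂ) else 0)) = ∑ k ∈ S, ζ (ee n k) := by
  classical
  induction S using Finset.induction_on with
  | empty =>
    have : (fun i : Fin n => if i ∈ (∅ : Finset (Fin n)) then (1:ℂ) else 0) = fun _ => 0 := by
      funext i; simp
    rw [this, Matrix.diagonal_zero, zeta_zero ζ hadm, Finset.sum_empty]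
  | @insert a S ha ih =>
    have hsplit : (fun i : Fin n => if i ∈ insert a S then (1:ℂ) else 0)
        = fun i : Fin n => (if i = a then (1:ℂ) else 0) + (if i ∈ S then (1:ℂ) else 0) := by
      funext i
      simp only [Finset.mem_insert]
      by_cases h1 : i = a
      · subst h1
        simp [ha]
      · simp [h1]
    rw [hsplit, ← Matrix.diagonal_add]
    rw [(hadm (Matrix.diagonal fun i : Fin n => if i = a then (1:ℂ) else 0)
      (Matrix.diagonal fun i : Fin n => if i ∈ S then (1:ℂ) else 0)
      (diag_normal _) (diag_normal _) (commute_diag _ _)).1]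
    rw [ih, Finset.sum_insert ha]
    rfl

end Zeta2

section Conj

lemma submatrix_mul' (σ : Fin n ≃ Fin n) (a b : Matrix (Fin n) (Fin n) ℂ) :
    a.submatrix ⇑σ ⇑σ * b.submatrix ⇑σ ⇑σ = (a * b).submatrix ⇑σ ⇑σ :=
  Matrix.submatrix_mul_equiv a b ⇑σ σ ⇑σ

lemma submatrix_star' (σ : Fin n ≃ Fin n) (a : Matrix (Fin n) (Fin n) ℂ) :
    star (a.submatrix ⇑σ ⇑σ) = (star a).submatrix ⇑σ ⇑σ := by
  rw [Matrix.star_eq_conjTranspose, Matrix.star_eq_conjTranspose, Matrix.conjTranspose_submatrix]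

lemma submatrix_normal' (σ : Fin n ≃ Fin n) {a : Matrix (Fin n) (Fin n) ℂ}
    (ha : IsStarNormal a) : IsStarNormal (a.submatrix ⇑σ ⇑σ) := by
  constructor
  show _ * _ = _ * _
  rw [submatrix_star', submatrix_mul', submatrix_mul', ha.star_comm_self]

end Conj

end

end KS


/-- Kochen–Specker: For `n ≥ 3` there is no piecewise `*`-homomorphism
`ℂ(Mₙ) → ℂ`, i.e. no map from normal `n × n` matrices to `ℂ` that is unital, involutive,
`ℂ`-homogeneous, and additive and multiplicative on all pairs of commuting normal
matrices. -/
theorem stmt10 (n : ℕ) (hn : 3 ≤ n) :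
    ¬ ∃ ζ : Matrix (Fin n) (Fin n) ℂ → ℂ,
      ζ 1 = 1 ∧
      (∀ a, IsStarNormal a → ζ (star a) = star (ζ a)) ∧
      (∀ (c : ℂ) a, IsStarNormal a → ζ (c • a) = c * ζ a) ∧
      (∀ a b, IsStarNormal a → IsStarNormal b → Commute a b →
        ζ (a + b) = ζ a + ζ b ∧ ζ (a * b) = ζ a * ζ b) := by
  rintro ⟨ζ, hone, -, -, hadm⟩
  classical
  have huniv : (1 : Matrix (Fin n) (Fin n) ℂ)
      = Matrix.diagonal (fun i => if i ∈ (Finset.univ : Finset (Fin n)) then (1:ℂ) else 0) := by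
    rw [show (fun i : Fin n => if i ∈ (Finset.univ : Finset (Fin n)) then (1:ℂ) else 0)
        = fun _ => 1 from funext fun i => if_pos (Finset.mem_univ i), Matrix.diagonal_one]
  have hsum : ∑ k ∈ Finset.univ, ζ (KS.ee n k) = 1 := by
    rw [← KS.zeta_diag_sum ζ hadm Finset.univ, ← huniv, hone]
  have hex : ∃ k : Fin n, ζ (KS.ee n k) = 1 := by
    by_contra hno
    push_neg at hno
    have h0 : ∀ k ∈ Finset.univ, ζ (KS.ee n k) = 0 := fun k _ =>
      (KS.zeta_proj_val ζ hadm (KS.ee_sa k) (KS.ee_idem k)).resolve_right (hno k)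
    rw [Finset.sum_eq_zero h0] at hsum
    exact zero_ne_one hsum
  obtain ⟨k, hk⟩ := hex
  have h2n : 2 < n := by omega
  set i2 : Fin n := ⟨2, h2n⟩ with hi2
  set σ : Fin n ≃ Fin n := Equiv.swap i2 k with hσ
  set ζ' : Matrix (Fin n) (Fin n) ℂ → ℂ := fun a => ζ (a.submatrix ⇑σ ⇑σ) with hζ'
  have hadm' : ∀ a b : Matrix (Fin n) (Fin n) ℂ, IsStarNormal a → IsStarNormal b → Commute a b →
      ζ' (a + b) = ζ' a + ζ' b ∧ ζ' (a * b) = ζ' a * ζ' b := by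
    intro a b hna hnb hab
    have hcomm : Commute (a.submatrix ⇑σ ⇑σ) (b.submatrix ⇑σ ⇑σ) := by
      show _ * _ = _ * _
      rw [KS.submatrix_mul', KS.submatrix_mul', hab.eq]
    constructor
    · have hadd : (a + b).submatrix ⇑σ ⇑σ = a.submatrix ⇑σ ⇑σ + b.submatrix ⇑σ ⇑σ :=
        congrFun (congrFun (Matrix.submatrix_add a b) ⇑σ) ⇑σ
      simp only [hζ']
      rw [hadd]
      exact (hadm _ _ (KS.submatrix_normal' σ hna) (KS.submatrix_normal' σ hnb) hcomm).1
    · simp only [hζ']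
      rw [← KS.submatrix_mul']
      exact (hadm _ _ (KS.submatrix_normal' σ hna) (KS.submatrix_normal' σ hnb) hcomm).2
  have hswap : σ.symm i2 = k := by
    rw [hσ, Equiv.symm_swap, Equiv.swap_apply_left]
  have hsub_ee : (KS.ee n i2).submatrix ⇑σ ⇑σ = KS.ee n k := by
    unfold KS.ee
    rw [Matrix.submatrix_diagonal_equiv]
    refine congrArg Matrix.diagonal (funext fun i => ?_)
    show (if σ i = i2 then (1:ℂ) else 0) = if i = k then 1 else 0
    have hiff : σ i = i2 ↔ i = k := by
      rw [σ.apply_eq_iff_eq_symm_apply, hswap]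
    simp only [hiff]
  have hk' : ζ' (KS.ee n i2) = 1 := by
    simp only [hζ']
    rw [hsub_ee]
    exact hk
  have ha0 := KS.zeta_proj_val ζ' hadm' (KS.ee_sa (⟨0, by omega⟩ : Fin n)) (KS.ee_idem _)
  have ha1 := KS.zeta_proj_val ζ' hadm' (KS.ee_sa (⟨1, by omega⟩ : Fin n)) (KS.ee_idem _)
  have hEsum : ζ' (KS.E n) = ζ' (KS.ee n ⟨0, by omega⟩) + ζ' (KS.ee n ⟨1, by omega⟩)
      + ζ' (KS.ee n i2) := by
    rw [KS.E_eq_sum3 hn]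
    exact KS.zeta_add3 ζ' hadm' (KS.ee_sa _) (KS.ee_sa _) (KS.ee_sa _)
      (KS.ee_mul_ne (by simp [Fin.ext_iff])) (KS.ee_mul_ne (by simp [Fin.ext_iff]))
      (KS.ee_mul_ne (by simp [Fin.ext_iff])) (KS.ee_mul_ne (by simp [Fin.ext_iff]))
      (KS.ee_mul_ne (by simp [Fin.ext_iff])) (KS.ee_mul_ne (by simp [Fin.ext_iff]))
  have hEval := KS.zeta_proj_val ζ' hadm' KS.E_sa KS.E_idem
  have hE1 : ζ' (KS.E n) = 1 := by
    rcases hEval with h | h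
    · exfalso
      rw [h, hk'] at hEsum
      rcases ha0 with h0 | h0 <;> rcases ha1 with h1 | h1 <;> rw [h0, h1] at hEsum <;>
        norm_num at hEsum
    · exact h
  exact KS.kscore n hn ζ' hadm' hE1
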